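/- Let p be a prime and let e ≥ 1 and j be integers. For every natural number n with (p−1)·n ≠ p·e·j, the rational number n − p·e·j/(p−1) is a nonzero p-adic integer; put l(n) := v_p(n − p·e·j/(p−1)) ∈ ℕ and ñ(n) := n + p·e·(p^{l(n)} − 1)/(p−1). Then v_p(ñ(n) − p·e·(j−1)/(p−1)) = l(n), and consequently the map n ↦ ñ(n) is injective on {n ∈ ℕ : (p−1)·n ≠ p·e·j}. -/

import Mathlib

/-- The rational number `n - p*e*j/(p-1)`. -/
def stmt5x (p : ℕ) (e j : ℤ) (n : ℕ) : ℚ :=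
  (n : ℚ) - ((p : ℚ) * (e : ℚ) * (j : ℚ)) / ((p : ℚ) - 1)

/-- `l(n) := v_p(n - p*e*j/(p-1))`, as a natural number. -/
def stmt5l (p : ℕ) (e j : ℤ) (n : ℕ) : ℕ :=
  (padicValRat p (stmt5x p e j n)).toNat

/-- `ñ(n) := n + p*e*(p^(l(n)) - 1)/(p-1)`. -/
def stmt5ntilde (p : ℕ) (e j : ℤ) (n : ℕ) : ℚ :=
  (n : ℚ) + ((p : ℚ) * (e : ℚ)) * ((p : ℚ) ^ (stmt5l p e j n) - 1) / ((p : ℚ) - 1)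

lemma aux5 (p : ℕ) (hp : p.Prime) (e j : ℤ) (he : 1 ≤ e) (n : ℕ)
    (h : ((p : ℤ) - 1) * (n : ℤ) ≠ (p : ℤ) * e * j) :
    stmt5x p e j n ≠ 0 ∧
      0 ≤ padicValRat p (stmt5x p e j n) ∧
      padicValRat p
          (stmt5ntilde p e j n - ((p : ℚ) * (e : ℚ) * ((j : ℚ) - 1)) / ((p : ℚ) - 1))
        = stmt5l p e j n := by
  haveI : Fact p.Prime := ⟨hp⟩
  have hp1 : (1 : ℚ) < (p : ℚ) := by exact_mod_cast hp.one_lt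
  have hpm1 : ((p : ℚ) - 1) ≠ 0 := by linarith
  have hpm1Z : ((p : ℤ) - 1) ≠ 0 := by
    have : (1 : ℤ) < (p : ℤ) := by exact_mod_cast hp.one_lt
    omega
  set N : ℤ := ((p : ℤ) - 1) * (n : ℤ) - (p : ℤ) * e * j with hN
  have hNne : N ≠ 0 := sub_ne_zero.mpr h
  have hxeq : stmt5x p e j n = (N : ℚ) / (((p : ℤ) - 1 : ℤ) : ℚ) := by
    rw [hN, stmt5x]; push_cast; rw [eq_div_iff hpm1, sub_mul, div_mul_cancel₀ _ hpm1]; ring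
  have hx0 : stmt5x p e j n ≠ 0 := by
    rw [hxeq]
    exact div_ne_zero (by exact_mod_cast hNne) (by push_cast; exact hpm1)
  have hvden : padicValRat p ((((p : ℤ) - 1 : ℤ) : ℚ)) = 0 := by
    rw [padicValRat.of_int, padicValInt.eq_zero_of_not_dvd]
    · simp
    · intro hdvd
      have h1 : (p : ℤ) ∣ (p : ℤ) - ((p : ℤ) - 1) := dvd_sub dvd_rfl hdvd
      simp only [sub_sub_cancel] at h1
      have h2 := Int.le_of_dvd one_pos h1
      have h3 : 2 ≤ (p : ℤ) := by exact_mod_cast hp.two_le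
      omega
  have hvx : padicValRat p (stmt5x p e j n) = padicValInt p N := by
    rw [hxeq, padicValRat.div (by exact_mod_cast hNne) (by push_cast; exact hpm1),
      hvden, padicValRat.of_int, sub_zero]
  have hvx0 : 0 ≤ padicValRat p (stmt5x p e j n) := by rw [hvx]; positivity
  refine ⟨hx0, hvx0, ?_⟩
  have hl : (stmt5l p e j n : ℤ) = padicValRat p (stmt5x p e j n) := by
    rw [stmt5l, Int.toNat_of_nonneg hvx0]
  set l := stmt5l p e j n with hldef
  set z : ℚ := (p : ℚ) ^ (l + 1) * (e : ℚ) / ((p : ℚ) - 1) with hz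
  have he0 : (e : ℚ) ≠ 0 := by exact_mod_cast (by omega : e ≠ 0)
  have hz0 : z ≠ 0 := by
    rw [hz]
    exact div_ne_zero (mul_ne_zero (pow_ne_zero _ (by linarith)) he0) hpm1
  have hvz : (l : ℤ) + 1 ≤ padicValRat p z := by
    rw [hz, padicValRat.div (mul_ne_zero (pow_ne_zero _ (by linarith)) he0) hpm1,
      padicValRat.mul (pow_ne_zero _ (by linarith)) he0]
    have h1 : padicValRat p ((p : ℚ) ^ (l + 1)) = (l : ℤ) + 1 := by
      rw [padicValRat.pow ((p:ℚ)), padicValRat.self hp.one_lt]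
      push_cast; ring
    have h2 : padicValRat p ((p : ℚ) - 1) = 0 := by
      have : ((p : ℚ) - 1) = (((p : ℤ) - 1 : ℤ) : ℚ) := by push_cast; ring
      rw [this, hvden]
    have h3 : 0 ≤ padicValRat p (e : ℚ) := by
      rw [show ((e : ℚ)) = ((e : ℤ) : ℚ) from rfl, padicValRat.of_int]; positivity
    omega
  have hlt : padicValRat p (stmt5x p e j n) < padicValRat p z := by
    rw [← hl]; omega
  have hyeq : stmt5ntilde p e j n - ((p : ℚ) * (e : ℚ) * ((j : ℚ) - 1)) / ((p : ℚ) - 1)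
      = stmt5x p e j n + z := by
    rw [stmt5ntilde, stmt5x, hz, ← hldef]
    field_simp
    ring
  have hsum0 : stmt5x p e j n + z ≠ 0 := by
    intro hc
    have : stmt5x p e j n = -z := by linarith [hc]
    rw [this, padicValRat.neg] at hlt
    exact lt_irrefl _ hlt
  rw [hyeq, padicValRat.add_eq_of_lt hsum0 hx0 hz0 hlt, ← hl]


/-- Propositions 6.21/6.24 ('the exponents of the targets are all different'): for `n` with
`(p-1)·n ≠ p·e·j`, the quantity `n - p·e·j/(p-1)` is a nonzero `p`-adic integer; with
`l(n)` its `p`-adic valuation and `ñ(n) = n + p·e·(p^(l(n))-1)/(p-1)` one has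
`v_p(ñ(n) - p·e·(j-1)/(p-1)) = l(n)`, and `n ↦ ñ(n)` is injective on that set. -/
theorem statement5 (p : ℕ) (hp : p.Prime) (e j : ℤ) (he : 1 ≤ e) :
    (∀ n : ℕ, ((p : ℤ) - 1) * (n : ℤ) ≠ (p : ℤ) * e * j →
      stmt5x p e j n ≠ 0 ∧
      0 ≤ padicValRat p (stmt5x p e j n) ∧
      padicValRat p
          (stmt5ntilde p e j n - ((p : ℚ) * (e : ℚ) * ((j : ℚ) - 1)) / ((p : ℚ) - 1))
        = stmt5l p e j n) ∧
    Set.InjOn (stmt5ntilde p e j)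
      {n : ℕ | ((p : ℤ) - 1) * (n : ℤ) ≠ (p : ℤ) * e * j} := by
  refine ⟨fun n hn => aux5 p hp e j he n hn, ?_⟩
  intro n1 h1 n2 h2 heq
  have H1 := (aux5 p hp e j he n1 h1).2.2
  have H2 := (aux5 p hp e j he n2 h2).2.2
  rw [heq] at H1
  rw [H2] at H1
  have hll : stmt5l p e j n2 = stmt5l p e j n1 := by exact_mod_cast H1
  have := heq
  rw [stmt5ntilde, stmt5ntilde, hll] at this
  have : (n1 : ℚ) = (n2 : ℚ) := by linarith
  exact_mod_cast this
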